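/- Let V be a finite-dimensional real normed vector space, let S ⊆ V be a subset, and let U be a set of invertible continuous linear maps V → V such that sup_{u ∈ U} ‖u‖_op < ∞ and u(S) = S for every u ∈ U. Let C ⊆ V be a cone such that the set D = {u(x) : u ∈ U, x ∈ C} is open in V. If ξ ∈ AC(S), ξ ≠ 0, and ξ ∈ D, then the set S ∩ C is unbounded. -/

import Mathlib

open Pointwise Bornology

/-- A subset `C` of a real vector space is a cone if `t • C = C` for every `t > 0`. -/
def IsCone {V : Type*} [NormedAddCommGroup V] [NormedSpace ℝ V] (C : Set V) : Prop :=
  ∀ t : ℝ, 0 < t → t • C = C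

/-- The asymptotic cone of a subset `S`: the set of `ξ` such that every open cone
containing `ξ` meets `S` in an unbounded set, together with `0`. -/
def asymptoticCone' {V : Type*} [NormedAddCommGroup V] [NormedSpace ℝ V] (S : Set V) : Set V :=
  {ξ : V | ∀ C : Set V, IsOpen C → IsCone C → ξ ∈ C → ¬ IsBounded (C ∩ S)} ∪ {0}

/-- If `S` is invariant under a family `U` of invertible continuous linear maps with
uniformly bounded operator norms, `C` is a cone whose `U`-saturation
`D = {u x : u ∈ U, x ∈ C}` is open, and `ξ` is a nonzero element of the asymptotic cone
of `S` lying in `D`, then `S ∩ C` is unbounded. -/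
theorem unbounded_inter_of_mem_asymptoticCone {V : Type*} [NormedAddCommGroup V]
    [NormedSpace ℝ V] [FiniteDimensional ℝ V] (S : Set V) (U : Set (V ≃L[ℝ] V))
    (hUbd : ∃ M : ℝ, ∀ u ∈ U, ‖(u : V →L[ℝ] V)‖ ≤ M)
    (hUS : ∀ u ∈ U, (u : V → V) '' S = S)
    (C : Set V) (hC : IsCone C)
    (hD : IsOpen {y : V | ∃ u ∈ U, ∃ x ∈ C, y = u x})
    (ξ : V) (hξAC : ξ ∈ asymptoticCone' S) (hξ0 : ξ ≠ 0)
    (hξD : ξ ∈ {y : V | ∃ u ∈ U, ∃ x ∈ C, y = u x}) :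
    ¬ IsBounded (S ∩ C) := by
  intro hbd
  rcases hξAC with hAC | h0
  · obtain ⟨M, hM⟩ := hUbd
    have hDcone : IsCone {y : V | ∃ u ∈ U, ∃ x ∈ C, y = u x} := by
      intro t ht
      ext y
      constructor
      · rintro ⟨z, ⟨u, hu, x, hx, rfl⟩, rfl⟩
        refine ⟨u, hu, t • x, ?_, (map_smul u t x).symm⟩
        rw [← hC t ht]
        exact ⟨x, hx, rfl⟩
      · rintro ⟨u, hu, x, hx, rfl⟩
        refine ⟨u (t⁻¹ • x), ⟨u, hu, t⁻¹ • x, ?_, rfl⟩, ?_⟩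
        · rw [← hC t⁻¹ (inv_pos.2 ht)]
          exact ⟨x, hx, rfl⟩
        · show t • _ = _
          rw [map_smul, smul_inv_smul₀ ht.ne']
    refine hAC _ hD hDcone hξD ?_
    obtain ⟨R, hR⟩ := isBounded_iff_forall_norm_le.1 hbd
    refine isBounded_iff_forall_norm_le.2 ⟨M * R, ?_⟩
    rintro y ⟨⟨u, hu, x, hx, rfl⟩, hyS⟩
    have hxS : x ∈ S := by
      rw [← hUS u hu] at hyS
      obtain ⟨z, hz, hzx⟩ := hyS
      rwa [← u.injective hzx]
    calc ‖u x‖ ≤ ‖(u : V →L[ℝ] V)‖ * ‖x‖ := (u : V →L[ℝ] V).le_opNorm x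
      _ ≤ M * R := mul_le_mul (hM u hu) (hR x ⟨hxS, hx⟩) (norm_nonneg _)
          ((norm_nonneg _).trans (hM u hu))
  · exact absurd h0 hξ0
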